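/- Let (Ω, 𝔽, ℙ) be a probability space and let X : Ω → ℝ be an integrable random variable with law μ and quantile function f_μ. Then the expectation of X equals the Lebesgue integral of its quantile function over the unit interval: E[X] = ∫_{(0,1)} f_μ(ω) dω. -/

import Mathlib

open MeasureTheory

/-- The cumulative distribution function of a measure on `ℝ`: `F_μ(x) = μ (-∞, x]`. -/
noncomputable def cdfOf (μ : Measure ℝ) (x : ℝ) : ℝ :=
  (μ (Set.Iic x)).toReal

/-- The quantile function (generalized inverse CDF) of a measure on `ℝ`:
`f_μ(ω) = inf {x | ω ≤ F_μ(x)}`. -/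
noncomputable def quantile (μ : Measure ℝ) (ω : ℝ) : ℝ :=
  sInf {x : ℝ | ω ≤ cdfOf μ x}

section Aux

open Set Filter ProbabilityTheory
open scoped Topology

variable (μ : Measure ℝ) [IsProbabilityMeasure μ]

lemma cdfOf_eq (x : ℝ) : cdfOf μ x = cdf μ x := (cdf_eq_real μ x).symm

lemma quantile_set_nonempty {ω : ℝ} (hω : ω < 1) : {x : ℝ | ω ≤ cdfOf μ x}.Nonempty := by
  obtain ⟨x, hx⟩ := ((tendsto_cdf_atTop μ).eventually (eventually_ge_nhds hω)).exists
  exact ⟨x, by simpa [cdfOf_eq] using hx⟩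

lemma quantile_set_bddBelow {ω : ℝ} (hω : 0 < ω) : BddBelow {x : ℝ | ω ≤ cdfOf μ x} := by
  obtain ⟨y, hy⟩ := ((tendsto_cdf_atBot μ).eventually (eventually_lt_nhds hω)).exists
  refine ⟨y, fun z hz => ?_⟩
  by_contra h
  push_neg at h
  have h2 : cdfOf μ z ≤ cdfOf μ y := by
    simp only [cdfOf_eq]; exact monotone_cdf μ h.le
  have hy' : cdfOf μ y < ω := by simpa [cdfOf_eq] using hy
  exact absurd (hz.trans h2) (not_le.mpr hy')

lemma quantile_le_iff {ω x : ℝ} (hω0 : 0 < ω) (hω1 : ω < 1) :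
    quantile μ ω ≤ x ↔ ω ≤ cdfOf μ x := by
  constructor
  · intro h
    simp only [cdfOf_eq]
    have key : ∀ y, x < y → ω ≤ cdf μ y := by
      intro y hy
      obtain ⟨z, hz, hzy⟩ := exists_lt_of_csInf_lt (quantile_set_nonempty μ hω1)
        (lt_of_le_of_lt h hy)
      exact le_trans (by simpa [cdfOf_eq] using hz) (monotone_cdf μ hzy.le)
    have hcont : Tendsto (cdf μ) (𝓝[>] x) (𝓝 (cdf μ x)) :=
      ((cdf μ).right_continuous x).tendsto.mono_left
        (nhdsWithin_mono x Ioi_subset_Ici_self)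
    exact ge_of_tendsto hcont (eventually_nhdsWithin_of_forall fun y hy => key y hy)
  · intro h
    exact csInf_le (quantile_set_bddBelow μ hω0) h

lemma quantile_monotoneOn : MonotoneOn (quantile μ) (Ioo (0:ℝ) 1) := by
  intro a ha b hb hab
  exact csInf_le_csInf (quantile_set_bddBelow μ ha.1) (quantile_set_nonempty μ hb.2)
    (fun x hx => le_trans hab hx)

lemma quantile_aemeasurable : AEMeasurable (quantile μ) (volume.restrict (Ioo (0:ℝ) 1)) :=
  aemeasurable_restrict_of_monotoneOn measurableSet_Ioo (quantile_monotoneOn μ)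

lemma map_quantile : Measure.map (quantile μ) (volume.restrict (Ioo (0:ℝ) 1)) = μ := by
  have hprob : IsProbabilityMeasure (volume.restrict (Ioo (0:ℝ) 1)) := by
    constructor
    simp [Real.volume_Ioo]
  refine Measure.ext_of_Iic _ _ (fun x => ?_)
  rw [Measure.map_apply_of_aemeasurable (quantile_aemeasurable μ) measurableSet_Iic,
    Measure.restrict_apply' measurableSet_Ioo]
  set c := cdfOf μ x with hc
  have hc0 : 0 ≤ c := ENNReal.toReal_nonneg
  have hc1 : c ≤ 1 := by
    rw [hc, cdfOf_eq]; exact cdf_le_one μ x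
  have hset : quantile μ ⁻¹' Iic x ∩ Ioo 0 1 = Iic c ∩ Ioo 0 1 := by
    ext ω
    simp only [mem_inter_iff, mem_preimage, mem_Iic, mem_Ioo, and_congr_left_iff]
    intro hω
    rw [quantile_le_iff μ hω.1 hω.2]
  rw [hset]
  have hsub1 : Ioo (0:ℝ) c ⊆ Iic c ∩ Ioo 0 1 :=
    fun ω hω => ⟨hω.2.le, hω.1, lt_of_lt_of_le hω.2 hc1⟩
  have hsub2 : Iic c ∩ Ioo 0 1 ⊆ Ioc 0 c := fun ω hω => ⟨hω.2.1, hω.1⟩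
  have h1 : volume (Ioo (0:ℝ) c) = ENNReal.ofReal c := by simp [Real.volume_Ioo]
  have h2 : volume (Ioc (0:ℝ) c) = ENNReal.ofReal c := by simp [Real.volume_Ioc]
  have := le_antisymm ((measure_mono hsub2).trans h2.le) (h1.symm.le.trans (measure_mono hsub1))
  rw [this, hc, cdfOf_eq, ofReal_cdf]


end Aux

open Set

/-- **The expectation of a random variable equals the integral of its quantile function
over the unit interval:** `E[X] = ∫_{(0,1)} f_μ(ω) dω`, where `μ` is the law of `X`. -/
theorem expectation_eq_integral_quantile {Ω : Type*} [MeasurableSpace Ω]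
    (ℙ : Measure Ω) [IsProbabilityMeasure ℙ]
    (X : Ω → ℝ) (hX : Measurable X) (hint : Integrable X ℙ) :
    (∫ ω, X ω ∂ℙ) = ∫ ω in Set.Ioo (0 : ℝ) 1, quantile (Measure.map X ℙ) ω := by
  set μ := Measure.map X ℙ with hμdef
  have hμ : IsProbabilityMeasure μ := Measure.isProbabilityMeasure_map hX.aemeasurable
  calc ∫ ω, X ω ∂ℙ = ∫ y, y ∂μ :=
        (integral_map hX.aemeasurable aestronglyMeasurable_id).symm
    _ = ∫ y, y ∂(Measure.map (quantile μ) (volume.restrict (Ioo (0:ℝ) 1))) := by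
        rw [map_quantile]
    _ = ∫ ω in Set.Ioo (0:ℝ) 1, quantile μ ω :=
        integral_map (quantile_aemeasurable μ) aestronglyMeasurable_id
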